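/- Let n ≥ 3, and in A[B_n] set Δ_{Y₁} = (r_1 r_2 ⋯ r_{n−2})(r_1 r_2 ⋯ r_{n−3}) ⋯ (r_1 r_2) r_1. Then Δ_Y · ρ_1 = Δ_{Y₁} and Δ_Y^{−1} · ρ_0 = Δ_{Y₁}^{−1}; moreover Δ_{Y₁}^{−1} r_n Δ_{Y₁} = r_n, and consequently δ = ρ_1^{−1} ρ_0 = Δ_{Y₁}^{−1} Δ_Y^2 Δ_{Y₁}^{−1}. -/

import Mathlib

/-- The defining relators of the Artin group of type `Bₙ`, as elements of the free
group on `n` generators (0-indexed: generator `i` corresponds to `r_{i+1}`). -/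
def BnRels (n : ℕ) : Set (FreeGroup (Fin n)) :=
  {w | (∃ i j : Fin n, (i : ℕ) + 1 = (j : ℕ) ∧ (j : ℕ) + 1 < n ∧
          w = FreeGroup.of i * FreeGroup.of j * FreeGroup.of i *
              (FreeGroup.of j * FreeGroup.of i * FreeGroup.of j)⁻¹) ∨
       (∃ i j : Fin n, (i : ℕ) + 2 = n ∧ (j : ℕ) + 1 = n ∧
          w = FreeGroup.of i * FreeGroup.of j * FreeGroup.of i * FreeGroup.of j *
              (FreeGroup.of j * FreeGroup.of i * FreeGroup.of j * FreeGroup.of i)⁻¹) ∨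
       (∃ i j : Fin n, (i : ℕ) + 2 ≤ (j : ℕ) ∧
          w = FreeGroup.of i * FreeGroup.of j * (FreeGroup.of j * FreeGroup.of i)⁻¹)}

/-- The Artin group `A[Bₙ]` of type `Bₙ`. -/
abbrev ArtinB (n : ℕ) := PresentedGroup (BnRels n)

/-- The standard generator `r_i` (1-indexed, `1 ≤ i ≤ n`). -/
def rB (n i : ℕ) : ArtinB n :=
  if h : i - 1 < n then PresentedGroup.of ⟨i - 1, h⟩ else 1

/-- `ρ_B = r_1 r_2 ⋯ r_n`. -/
def ρB (n : ℕ) : ArtinB n := ((List.range n).map fun i => rB n (i + 1)).prod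

/-- `Δ_B = ρ_B ^ n`, the generator of the center. -/
def ΔB (n : ℕ) : ArtinB n := ρB n ^ n

/-- `t_i` for `i` read modulo `n`: `t_i = r_i` for `1 ≤ i ≤ n-1`,
and `t_0 = ρ_B r_{n-1} ρ_B⁻¹`. -/
def tB (n i : ℕ) : ArtinB n :=
  if i % n = 0 then ρB n * rB n (n - 1) * (ρB n)⁻¹ else rB n (i % n)

/-- `Δ_Y = (t_1⋯t_{n-1})(t_1⋯t_{n-2})⋯(t_1t_2)t_1`, the Garside element of the
parabolic subgroup of type `A_{n-1}`. -/
def ΔY (n : ℕ) : ArtinB n :=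
  ((List.range (n - 1)).map fun k =>
    ((List.range (n - 1 - k)).map fun i => rB n (i + 1)).prod).prod

/-- `ρ_0 = t_1 t_2 ⋯ t_{n-1}`. -/
def ρ₀B (n : ℕ) : ArtinB n := ((List.range (n - 1)).map fun i => rB n (i + 1)).prod

/-- `ρ_1 = t_1⁻¹ t_2⁻¹ ⋯ t_{n-1}⁻¹`. -/
def ρ₁B (n : ℕ) : ArtinB n := ((List.range (n - 1)).map fun i => (rB n (i + 1))⁻¹).prod

/-- `ρ_k` for `k ∈ {0,1}`. -/
def ρkB (n k : ℕ) : ArtinB n := if k = 0 then ρ₀B n else ρ₁B n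

/-- `v_k = ρ_k t_{n-1} ρ_k⁻¹` for `k ∈ {0,1}`. -/
def vB (n k : ℕ) : ArtinB n := ρkB n k * rB n (n - 1) * (ρkB n k)⁻¹

/-- `δ = r_{n-1} r_{n-2} ⋯ r_2 r_1² r_2 ⋯ r_{n-2} r_{n-1}`. -/
def δB (n : ℕ) : ArtinB n :=
  ((List.range (n - 2)).map fun i => rB n (n - 1 - i)).prod * rB n 1 ^ 2 *
  ((List.range (n - 2)).map fun i => rB n (i + 2)).prod

/-- The quotient `Ā = A[Bₙ]/Z(A[Bₙ])`. -/
abbrev AbarB (n : ℕ) := ArtinB n ⧸ Subgroup.center (ArtinB n)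

/-- The canonical projection `π : A[Bₙ] → Ā`. -/
def πB (n : ℕ) : ArtinB n →* AbarB n := QuotientGroup.mk' (Subgroup.center (ArtinB n))

/-- `t̄_i = π(t_i)`. -/
def tbar (n i : ℕ) : AbarB n := πB n (tB n i)

/-- `ρ̄_B = π(ρ_B)`. -/
def ρbar (n : ℕ) : AbarB n := πB n (ρB n)

/-- The composition `conj_x ∘ φ` of an endomorphism with an inner automorphism. -/
def conjComp {G : Type*} [Group G] (x : G) (φ : G →* G) : G →* G :=
  (MulAut.conj x).toMonoidHom.comp φ

/-- Type (1): there are commuting `g, h` with `φ(t_i) = g` for all `0 ≤ i ≤ n-1`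
and `φ(ρ_B) = h`. -/
def IsType1 (n : ℕ) (φ : ArtinB n →* ArtinB n) : Prop :=
  ∃ g h : ArtinB n, g * h = h * g ∧ (∀ i < n, φ (tB n i) = g) ∧ φ (ρB n) = h

/-- Type (2a) with parameters `ε ∈ {1,-1}`, `p q : ℤ`. -/
def IsType2a (n : ℕ) (ε p q : ℤ) (φ : ArtinB n →* ArtinB n) : Prop :=
  (ε = 1 ∨ ε = -1) ∧ (∀ i < n, φ (tB n i) = tB n i ^ ε * ΔB n ^ p) ∧
    φ (ρB n) = ρB n * ΔB n ^ q

/-- Type (2b) with parameters `ε ∈ {1,-1}`, `p q : ℤ`. -/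
def IsType2b (n : ℕ) (ε p q : ℤ) (φ : ArtinB n →* ArtinB n) : Prop :=
  (ε = 1 ∨ ε = -1) ∧ (∀ i < n, φ (tB n i) = tB n (n - i) ^ ε * ΔB n ^ p) ∧
    φ (ρB n) = (ρB n)⁻¹ * ΔB n ^ q

/-- Type (3) with parameters `ε ∈ {1,-1}`, `k ∈ {0,1}`, `p q r s : ℤ`. -/
def IsType3 (n : ℕ) (ε : ℤ) (k : ℕ) (p q r s : ℤ) (φ : ArtinB n →* ArtinB n) : Prop :=
  (ε = 1 ∨ ε = -1) ∧ (k = 0 ∨ k = 1) ∧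
    (∀ i, 1 ≤ i → i ≤ n - 1 → φ (tB n i) = tB n i ^ ε * ΔY n ^ (2 * p) * ΔB n ^ q) ∧
    φ (tB n 0) = vB n k ^ ε * ΔY n ^ (2 * p) * ΔB n ^ q ∧
    φ (ρB n) = ρkB n k * ΔY n ^ (2 * r) * ΔB n ^ s

/-- `Δ_{Y₁} = (r_1 ⋯ r_{n-2})(r_1 ⋯ r_{n-3}) ⋯ (r_1 r_2) r_1`, the Garside element of
the parabolic subgroup generated by `r_1, …, r_{n-2}`. -/
def ΔY₁ (n : ℕ) : ArtinB n :=
  ((List.range (n - 2)).map fun k =>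
    ((List.range (n - 2 - k)).map fun i => rB n (i + 1)).prod).prod

namespace DeltaY1Aux

/-- `C m = r_1 r_2 ⋯ r_m`. -/
def CB (n m : ℕ) : ArtinB n := ((List.range m).map fun i => rB n (i + 1)).prod

/-- `R m = r_m r_{m-1} ⋯ r_1`. -/
def RB (n m : ℕ) : ArtinB n := ((List.range m).map fun i => rB n (m - i)).prod

/-- `D m = C m ⋯ C 1`. -/
def DB (n m : ℕ) : ArtinB n := ((List.range m).map fun k => CB n (m - k)).prod

lemma CB_succ (n m : ℕ) : CB n (m + 1) = CB n m * rB n (m + 1) := by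
  simp [CB, List.range_succ]

lemma RB_succ (n m : ℕ) : RB n (m + 1) = rB n (m + 1) * RB n m := by
  simp [RB, List.range_succ_eq_map, List.map_map, Function.comp_def, Nat.succ_sub_succ]

lemma DB_succ (n m : ℕ) : DB n (m + 1) = CB n (m + 1) * DB n m := by
  simp [DB, List.range_succ_eq_map, List.map_map, Function.comp_def, Nat.succ_sub_succ]

lemma rB_comm (n i j : ℕ) (hi : 1 ≤ i) (hij : i + 2 ≤ j) (hj : j ≤ n) :
    rB n i * rB n j = rB n j * rB n i := by
  have hi' : i - 1 < n := by omega
  have hj' : j - 1 < n := by omega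
  have hmem : (FreeGroup.of (⟨i - 1, hi'⟩ : Fin n) * FreeGroup.of (⟨j - 1, hj'⟩ : Fin n) *
      (FreeGroup.of (⟨j - 1, hj'⟩ : Fin n) * FreeGroup.of (⟨i - 1, hi'⟩ : Fin n))⁻¹)
      ∈ BnRels n := by
    refine Or.inr (Or.inr ⟨⟨i - 1, hi'⟩, ⟨j - 1, hj'⟩, ?_, rfl⟩)
    simpa using by omega
  have h1 : (QuotientGroup.mk' (Subgroup.normalClosure (BnRels n)))
      (FreeGroup.of (⟨i - 1, hi'⟩ : Fin n) * FreeGroup.of (⟨j - 1, hj'⟩ : Fin n) *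
      (FreeGroup.of (⟨j - 1, hj'⟩ : Fin n) * FreeGroup.of (⟨i - 1, hi'⟩ : Fin n))⁻¹) = 1 := by
    rw [QuotientGroup.mk'_apply, QuotientGroup.eq_one_iff]
    exact Subgroup.subset_normalClosure hmem
  simp only [map_mul, map_inv, mul_inv_eq_one] at h1
  have e1 : rB n i = (QuotientGroup.mk' (Subgroup.normalClosure (BnRels n)))
      (FreeGroup.of (⟨i - 1, hi'⟩ : Fin n)) := by rw [rB, dif_pos hi']; rfl
  have e2 : rB n j = (QuotientGroup.mk' (Subgroup.normalClosure (BnRels n)))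
      (FreeGroup.of (⟨j - 1, hj'⟩ : Fin n)) := by rw [rB, dif_pos hj']; rfl
  rw [e1, e2]; exact h1


lemma rB_comm_CB (n j : ℕ) (hj : j ≤ n) :
    ∀ m, m + 2 ≤ j → CB n m * rB n j = rB n j * CB n m := by
  intro m
  induction m with
  | zero => intro _; simp [CB]
  | succ m ih =>
    intro h
    rw [CB_succ, mul_assoc, rB_comm n (m + 1) j (by omega) (by omega) hj,
      ← mul_assoc, ih (by omega), mul_assoc]

lemma rB_comm_DB (n j : ℕ) (hj : j ≤ n) :
    ∀ m, m + 2 ≤ j → DB n m * rB n j = rB n j * DB n m := by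
  intro m
  induction m with
  | zero => intro _; simp [DB]
  | succ m ih =>
    intro h
    rw [DB_succ, mul_assoc, ih (by omega), ← mul_assoc,
      rB_comm_CB n j hj (m + 1) h, mul_assoc]

lemma star (n : ℕ) : ∀ m, m + 1 ≤ n → DB n m * RB n (m + 1) = CB n (m + 1) * DB n m := by
  intro m
  induction m with
  | zero => intro _; simp [DB, RB, CB, List.range_succ]
  | succ m ih =>
    intro h
    calc DB n (m + 1) * RB n (m + 2)
        = CB n (m + 1) * (DB n m * rB n (m + 2) * RB n (m + 1)) := by
          rw [DB_succ n m, RB_succ n (m + 1)]; group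
      _ = CB n (m + 1) * (rB n (m + 2) * (DB n m * RB n (m + 1))) := by
          rw [rB_comm_DB n (m + 2) h m (by omega), mul_assoc]
      _ = CB n (m + 1) * (rB n (m + 2) * (CB n (m + 1) * DB n m)) := by
          rw [ih (by omega)]
      _ = CB n (m + 2) * DB n (m + 1) := by rw [CB_succ n (m + 1), DB_succ n m]; group

lemma rho1_inv' (n : ℕ) :
    ∀ m, (((List.range m).map fun i => (rB n (i + 1))⁻¹).prod)⁻¹ = RB n m := by
  intro m
  induction m with
  | zero => simp [RB]
  | succ m ih => rw [List.range_succ, RB_succ, ← ih]; simp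


end DeltaY1Aux

open DeltaY1Aux

/-- `Δ_Y ρ_1 = Δ_{Y₁}`, `Δ_Y⁻¹ ρ_0 = Δ_{Y₁}⁻¹`,
`Δ_{Y₁}⁻¹ r_n Δ_{Y₁} = r_n`, and consequently
`δ = ρ_1⁻¹ ρ_0 = Δ_{Y₁}⁻¹ Δ_Y² Δ_{Y₁}⁻¹`, in `A[Bₙ]` for `n ≥ 3`. -/
theorem deltaY1_identities (n : ℕ) (hn : 3 ≤ n) :
    ΔY n * ρ₁B n = ΔY₁ n ∧
    (ΔY n)⁻¹ * ρ₀B n = (ΔY₁ n)⁻¹ ∧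
    (ΔY₁ n)⁻¹ * rB n n * ΔY₁ n = rB n n ∧
    δB n = (ρ₁B n)⁻¹ * ρ₀B n ∧
    δB n = (ΔY₁ n)⁻¹ * ΔY n ^ 2 * (ΔY₁ n)⁻¹ := by
  
  obtain ⟨m, rfl⟩ : ∃ m, n = m + 3 := ⟨n - 3, by omega⟩
  have e1 : m + 3 - 1 = m + 2 := rfl
  have e2 : m + 3 - 2 = m + 1 := rfl
  have hDY : ΔY (m + 3) = DB (m + 3) (m + 2) := by simp only [ΔY, DB, CB, e1]
  have hDY1 : ΔY₁ (m + 3) = DB (m + 3) (m + 1) := by simp only [ΔY₁, DB, CB, e2]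
  have hρ0 : ρ₀B (m + 3) = CB (m + 3) (m + 2) := by simp only [ρ₀B, CB, e1]
  have hρ1 : (ρ₁B (m + 3))⁻¹ = RB (m + 3) (m + 2) := by
    simp only [ρ₁B, e1]; exact rho1_inv' _ _
  have hρ1' : ρ₁B (m + 3) = (RB (m + 3) (m + 2))⁻¹ := by rw [← hρ1, inv_inv]
  have h_split : DB (m + 3) (m + 2) = CB (m + 3) (m + 2) * DB (m + 3) (m + 1) :=
    DB_succ _ _
  have h_star : DB (m + 3) (m + 1) * RB (m + 3) (m + 2) =
      CB (m + 3) (m + 2) * DB (m + 3) (m + 1) := star _ (m + 1) (by omega)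
  have p1 : ΔY (m + 3) * ρ₁B (m + 3) = ΔY₁ (m + 3) := by
    rw [hDY, hDY1, h_split, ← h_star, hρ1']; group
  have p2 : (ΔY (m + 3))⁻¹ * ρ₀B (m + 3) = (ΔY₁ (m + 3))⁻¹ := by
    rw [hDY, hDY1, hρ0, h_split]; group
  have p3 : (ΔY₁ (m + 3))⁻¹ * rB (m + 3) (m + 3) * ΔY₁ (m + 3) = rB (m + 3) (m + 3) := by
    have hc := rB_comm_DB (m + 3) (m + 3) le_rfl (m + 1) (by omega)
    rw [hDY1, mul_assoc, ← hc, ← mul_assoc, inv_mul_cancel, one_mul]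
  have hRsplit : RB (m + 3) (m + 2) =
      ((List.range (m + 1)).map fun i => rB (m + 3) (m + 2 - i)).prod * rB (m + 3) 1 := by
    rw [RB, List.range_succ]
    simp [show m + 2 - (m + 1) = 1 from by omega]
  have hCsplit : CB (m + 3) (m + 2) =
      rB (m + 3) 1 * ((List.range (m + 1)).map fun i => rB (m + 3) (i + 2)).prod := by
    rw [CB, List.range_succ_eq_map]
    simp [List.map_map, Function.comp_def]
  have hδ : δB (m + 3) =
      ((List.range (m + 1)).map fun i => rB (m + 3) (m + 2 - i)).prod * rB (m + 3) 1 ^ 2 *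
      ((List.range (m + 1)).map fun i => rB (m + 3) (i + 2)).prod := by
    simp only [δB, e1, e2]
  have p4 : δB (m + 3) = (ρ₁B (m + 3))⁻¹ * ρ₀B (m + 3) := by
    rw [hδ, hρ1, hρ0, hRsplit, hCsplit, pow_two]; group
  have p5 : δB (m + 3) = (ΔY₁ (m + 3))⁻¹ * ΔY (m + 3) ^ 2 * (ΔY₁ (m + 3))⁻¹ := by
    rw [p4, show ρ₁B (m + 3) = (ΔY (m + 3))⁻¹ * ΔY₁ (m + 3) from by rw [← p1]; group,
      show ρ₀B (m + 3) = ΔY (m + 3) * (ΔY₁ (m + 3))⁻¹ from by rw [← p2]; group, pow_two]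
    group
  exact ⟨p1, p2, p3, p4, p5⟩
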